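/- Let 𝔸 be a complex Banach algebra, a ∈ 𝔸, T > 0, and let w_1, …, w_p be complex numbers with e_k(w_1, …, w_p) = 1/k! for k = 1, …, p. Then there exists a constant C > 0 such that for every positive integer N, setting h = T/N, ‖(∏_{i=1}^p (1 + h·w_i·a))^N − exp(T·a)‖ ≤ C·h^p; i.e., the p-step complex Euler method converges with order p for linear systems ẏ = Ay, including matrix systems and spatially discretized linear PDEs. -/

import Mathlib

open Finset Polynomial

section Aux

lemma prod_expand {𝔸 : Type*} [NormedRing 𝔸] [NormedAlgebra ℂ 𝔸]
    (a : 𝔸) (p : ℕ) (z : Fin p → ℂ) :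
    (List.ofFn fun i : Fin p => (1 : 𝔸) + z i • a).prod
      = ∑ k ∈ Finset.range (p+1),
          (∑ s ∈ Finset.univ.powersetCard k, ∏ i ∈ s, z i) • a ^ k := by
  classical
  have hfac : ∀ i : Fin p, (1 : 𝔸) + z i • a = aeval a (C (z i) * X + 1) := by
    intro i
    simp [Algebra.smul_def, add_comm]
  have h1 : (List.ofFn fun i : Fin p => (1 : 𝔸) + z i • a).prod
      = aeval a (∏ i : Fin p, (C (z i) * X + 1)) := by
    simp_rw [hfac]
    rw [show (List.ofFn fun i : Fin p => aeval a (C (z i) * X + 1))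
        = (List.ofFn fun i : Fin p => (C (z i) * X + 1)).map (aeval a) by
      rw [List.map_ofFn]; rfl]
    rw [← map_list_prod, List.prod_ofFn]
  rw [h1, Finset.prod_add]
  have h2 : ∀ t : Finset (Fin p),
      (∏ i ∈ t, (C (z i) * X)) * ∏ i ∈ Finset.univ \ t, (1 : ℂ[X])
        = C (∏ i ∈ t, z i) * X ^ t.card := by
    intro t
    rw [Finset.prod_const_one, mul_one, Finset.prod_mul_distrib, map_prod,
      Finset.prod_const]
  simp_rw [h2]
  rw [map_sum]
  have h3 : ∀ t : Finset (Fin p),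
      aeval a (C (∏ i ∈ t, z i) * X ^ t.card) = (∏ i ∈ t, z i) • a ^ t.card := by
    intro t
    rw [map_mul, aeval_C, map_pow, aeval_X, ← Algebra.smul_def]
  simp_rw [h3]
  rw [Finset.powerset_card_disjiUnion]; refine (Finset.sum_disjiUnion _ _ _).trans ?_
  rw [Finset.card_univ, Fintype.card_fin]
  refine Finset.sum_congr rfl fun k hk => ?_
  rw [Finset.sum_smul]
  refine Finset.sum_congr rfl fun t ht => ?_
  rw [(Finset.mem_powersetCard.mp ht).2]

lemma esymm_scaled (p : ℕ) (w : Fin p → ℂ)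
    (hesymm : ∀ k : ℕ, 1 ≤ k → k ≤ p →
      ∑ s ∈ Finset.univ.powersetCard k, ∏ i ∈ s, w i = 1 / (Nat.factorial k : ℂ))
    (c : ℂ) (k : ℕ) (hk : k ≤ p) :
    ∑ s ∈ Finset.univ.powersetCard k, ∏ i ∈ s, (c * w i)
      = ((k.factorial)⁻¹ : ℂ) * c ^ k := by
  have h1 : ∀ s ∈ (Finset.univ : Finset (Fin p)).powersetCard k,
      ∏ i ∈ s, (c * w i) = c ^ k * ∏ i ∈ s, w i := by
    intro s hs
    rw [Finset.prod_mul_distrib, Finset.prod_const, (Finset.mem_powersetCard.mp hs).2]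
  rw [Finset.sum_congr rfl h1, ← Finset.mul_sum]
  rcases Nat.eq_zero_or_pos k with hk0 | hk0
  · subst hk0
    simp
  · rw [hesymm k hk0 hk, one_div]
    ring

variable {𝔸 : Type*} [NormedRing 𝔸] [NormedAlgebra ℂ 𝔸] [CompleteSpace 𝔸]

lemma exp_split (x : 𝔸) (m : ℕ) :
    NormedSpace.exp x = (∑ k ∈ Finset.range m, ((k.factorial)⁻¹ : ℂ) • x ^ k)
      + ∑' n : ℕ, (((n + m).factorial)⁻¹ : ℂ) • x ^ (n + m) := by
  rw [NormedSpace.exp_eq_tsum ℂ]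
  exact (Summable.sum_add_tsum_nat_add m (NormedSpace.expSeries_summable' (𝕂 := ℂ) x)).symm

omit [CompleteSpace 𝔸] in
lemma tail_norm_le (x : 𝔸) (m : ℕ) (hm : 1 ≤ m) :
    ‖∑' n : ℕ, (((n + m).factorial)⁻¹ : ℂ) • x ^ (n + m)‖
      ≤ ‖x‖ ^ m / m.factorial * Real.exp ‖x‖ := by
  have hsum : Summable fun n : ℕ => ‖(((n + m).factorial)⁻¹ : ℂ) • x ^ (n + m)‖ :=
    (summable_nat_add_iff m).2 (NormedSpace.norm_expSeries_summable' (𝕂 := ℂ) x)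
  have hg : Summable fun n : ℕ => ‖x‖ ^ m / m.factorial * (‖x‖ ^ n / n.factorial) :=
    (Real.summable_pow_div_factorial ‖x‖).mul_left _
  have hle : ∀ n : ℕ, ‖(((n + m).factorial)⁻¹ : ℂ) • x ^ (n + m)‖
      ≤ ‖x‖ ^ m / m.factorial * (‖x‖ ^ n / n.factorial) := by
    intro n
    rw [norm_smul, norm_inv, Complex.norm_natCast]
    have h1 : ‖x ^ (n + m)‖ ≤ ‖x‖ ^ (n + m) :=
      norm_pow_le' x (by omega)
    have h2 : ((n.factorial * m.factorial : ℕ) : ℝ) ≤ ((n + m).factorial : ℝ) := by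
      exact_mod_cast Nat.le_of_dvd (n + m).factorial_pos
        (Nat.factorial_mul_factorial_dvd_factorial_add n m)
    have h3 : (((n + m).factorial : ℝ))⁻¹ ≤ ((n.factorial * m.factorial : ℕ) : ℝ)⁻¹ :=
      inv_anti₀ (by positivity) h2
    calc (((n + m).factorial : ℝ))⁻¹ * ‖x ^ (n + m)‖
        ≤ ((n.factorial * m.factorial : ℕ) : ℝ)⁻¹ * ‖x‖ ^ (n + m) :=
          mul_le_mul h3 h1 (norm_nonneg _) (by positivity)
      _ = ‖x‖ ^ m / m.factorial * (‖x‖ ^ n / n.factorial) := by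
          push_cast
          rw [pow_add]
          field_simp
  calc ‖∑' n : ℕ, (((n + m).factorial)⁻¹ : ℂ) • x ^ (n + m)‖
      ≤ ∑' n : ℕ, ‖(((n + m).factorial)⁻¹ : ℂ) • x ^ (n + m)‖ :=
        norm_tsum_le_tsum_norm hsum
    _ ≤ ∑' n : ℕ, ‖x‖ ^ m / m.factorial * (‖x‖ ^ n / n.factorial) :=
        Summable.tsum_le_tsum hle hsum hg
    _ = ‖x‖ ^ m / m.factorial * ∑' n : ℕ, ‖x‖ ^ n / n.factorial := tsum_mul_left
    _ = ‖x‖ ^ m / m.factorial * Real.exp ‖x‖ := by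
        congr 1
        rw [Real.exp_eq_exp_ℝ, NormedSpace.exp_eq_tsum_div]

lemma norm_exp_le' (x : 𝔸) :
    ‖NormedSpace.exp x‖ ≤ ‖(1 : 𝔸)‖ + ‖x‖ * Real.exp ‖x‖ := by
  rw [exp_split x 1]
  refine (norm_add_le _ _).trans ?_
  gcongr
  · simp
  · simpa using tail_norm_le x 1 le_rfl

end Aux

/-- Let `𝔸` be a complex Banach algebra, `a ∈ 𝔸`, `T > 0`, and let `w 1, …, w p`
be complex step fractions with `e_k(w) = 1/k!` for `k = 1, …, p`. Then there is
`C > 0` such that for every positive integer `N`, with `h = T/N`,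
`‖(∏ i, (1 + h w i a))^N − exp(T a)‖ ≤ C h^p`: the `p`-step complex Euler method
converges with order `p` for linear systems `ẏ = A y`. (The product is taken in
the order `i = 1, …, p`; the factors pairwise commute.) -/
theorem complex_euler_global_error_banach_algebra
    {𝔸 : Type*} [NormedRing 𝔸] [NormedAlgebra ℂ 𝔸] [CompleteSpace 𝔸]
    (a : 𝔸) (T : ℝ) (hT : 0 < T) (p : ℕ) (hp : 1 ≤ p) (w : Fin p → ℂ)
    (hesymm : ∀ k : ℕ, 1 ≤ k → k ≤ p →
      ∑ s ∈ Finset.univ.powersetCard k, ∏ i ∈ s, w i = 1 / (Nat.factorial k : ℂ)) :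
    ∃ C > (0 : ℝ), ∀ N : ℕ, 0 < N →
      ‖(List.ofFn fun i : Fin p =>
          (1 : 𝔸) + (((T / N : ℝ) : ℂ) * w i) • a).prod ^ N
        - NormedSpace.exp (((T : ℂ)) • a)‖ ≤ C * (T / N) ^ p := by
  classical
  set A : ℝ := ‖a‖ with hA
  set D : ℝ := max ‖(1 : 𝔸)‖ 1 with hDdef
  have hD1 : (1:ℝ) ≤ D := le_max_right _ _
  have hD0 : ‖(1 : 𝔸)‖ ≤ D := le_max_left _ _
  have hA0 : 0 ≤ A := norm_nonneg a
  set M : ℝ := A ^ (p+1) * Real.exp (T*A) / (p+1).factorial with hMdef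
  have hM0 : 0 ≤ M := by positivity
  set Ey : ℝ := D + T*A*Real.exp (T*A) with hEydef
  have hEypos : 0 ≤ T*A*Real.exp (T*A) := by positivity
  have hEy1 : 1 ≤ Ey := by rw [hEydef]; linarith
  have hEy0 : 0 < Ey := by linarith
  set Ex : ℝ := Ey * D^2 * Real.exp (M * T^(p+1)) with hExdef
  have hEx0 : 0 < Ex := by positivity
  refine ⟨Ex * Ey * M * T + 1, by positivity, ?_⟩
  intro N hN
  have hNR : (0:ℝ) < N := by exact_mod_cast hN
  set h : ℝ := T / N with hh
  have hh0 : 0 < h := div_pos hT hNR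
  have hhT : h ≤ T := div_le_self hT.le (by exact_mod_cast hN)
  have hNh : (N:ℝ) * h = T := by
    rw [hh]; field_simp
  set c : ℂ := ((h : ℝ) : ℂ) with hc
  set x : 𝔸 := (List.ofFn fun i : Fin p => (1 : 𝔸) + (c * w i) • a).prod with hx
  set y : 𝔸 := NormedSpace.exp (c • a) with hy
  -- expansion of x
  have hx_expand : x = ∑ k ∈ Finset.range (p+1), ((k.factorial)⁻¹ : ℂ) • (c • a) ^ k := by
    rw [hx, prod_expand a p (fun i => c * w i)]
    refine Finset.sum_congr rfl fun k hk => ?_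
    rw [esymm_scaled p w hesymm c k (Nat.lt_succ_iff.mp (Finset.mem_range.mp hk)),
      _root_.smul_pow, smul_smul]
  -- local error
  have hr_eq : x - y = -∑' n : ℕ, (((n + (p+1)).factorial)⁻¹ : ℂ) • (c • a) ^ (n + (p+1)) := by
    rw [hx_expand, hy, exp_split (c • a) (p+1)]
    abel
  have hca : ‖c • a‖ = h * A := by
    rw [norm_smul, hc, Complex.norm_real, Real.norm_eq_abs, abs_of_pos hh0]
  have hhA : h * A ≤ T * A := mul_le_mul_of_nonneg_right hhT hA0
  have hr_le : ‖x - y‖ ≤ M * h ^ (p+1) := by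
    rw [hr_eq, norm_neg]
    refine (tail_norm_le (c • a) (p+1) (by omega)).trans ?_
    rw [hca, hMdef, mul_pow]
    calc h ^ (p+1) * A ^ (p+1) / ((p+1).factorial : ℝ) * Real.exp (h*A)
        ≤ h ^ (p+1) * A ^ (p+1) / ((p+1).factorial : ℝ) * Real.exp (T*A) := by
          gcongr
      _ = A ^ (p+1) * Real.exp (T*A) / ((p+1).factorial : ℝ) * h ^ (p+1) := by ring
  -- commutation
  have hax : Commute a x := by
    rw [hx]
    apply Commute.list_prod_right
    intro u hu
    rw [List.mem_ofFn] at hu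
    obtain ⟨i, rfl⟩ := hu
    exact (Commute.one_right a).add_right ((Commute.refl a).smul_right _)
  have hxca : Commute x (c • a) := (hax.symm).smul_right c
  have hxy : Commute x y := hxca.exp_right
  -- powers of y are bounded
  have hypow : ∀ k : ℕ, k ≤ N → ‖y ^ k‖ ≤ Ey := by
    intro k hk
    let +nondep : NormedAlgebra ℚ 𝔸 := .restrictScalars ℚ ℂ 𝔸
    rw [hy, ← NormedSpace.exp_nsmul]
    have hnorm : ‖(k : ℕ) • (c • a)‖ ≤ T * A := by
      refine norm_nsmul_le.trans ?_
      rw [hca]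
      calc (k:ℝ) * (h * A) ≤ (N:ℝ) * (h * A) :=
            mul_le_mul_of_nonneg_right (by exact_mod_cast hk) (by positivity)
        _ = T * A := by rw [← hNh]; ring
    refine (norm_exp_le' _).trans ?_
    rw [hEydef]
    exact add_le_add hD0
      (mul_le_mul hnorm (Real.exp_le_exp.2 hnorm) (Real.exp_pos _).le (by positivity))
  -- powers of x are bounded
  have hrpow : ∀ s : ℕ, ‖(x - y) ^ s‖ ≤ D * ‖x - y‖ ^ s := by
    intro s
    rcases Nat.eq_zero_or_pos s with rfl | hs
    · simpa using hD0
    · exact (norm_pow_le' _ hs).trans (le_mul_of_one_le_left (by positivity) hD1)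
  have hyr : Commute y (x - y) := (hxy.symm).sub_right (Commute.refl y)
  have hxpow : ∀ m : ℕ, m ≤ N → ‖x ^ m‖ ≤ Ex := by
    intro m hm
    have hxsum : x = y + (x - y) := by abel
    rw [hxsum, hyr.add_pow]
    refine (norm_sum_le _ _).trans ?_
    have hterm : ∀ j ∈ Finset.range (m+1),
        ‖y ^ j * (x - y) ^ (m - j) * (m.choose j : 𝔸)‖
          ≤ Ey * D^2 * ((m.choose j : ℝ) * ‖x - y‖ ^ (m - j)) := by
      intro j hj
      have hj' : j ≤ N := le_trans (Nat.lt_succ_iff.mp (Finset.mem_range.mp hj)) hm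
      have hcast : ((m.choose j : ℕ) : 𝔸) = (m.choose j) • (1 : 𝔸) := by
        simp [nsmul_eq_mul]
      have hchoose : ‖((m.choose j : ℕ) : 𝔸)‖ ≤ (m.choose j : ℝ) * D := by
        rw [hcast]
        exact norm_nsmul_le.trans (by gcongr)
      calc ‖y ^ j * (x - y) ^ (m - j) * (m.choose j : 𝔸)‖
          ≤ ‖y ^ j * (x - y) ^ (m - j)‖ * ‖((m.choose j : ℕ) : 𝔸)‖ := norm_mul_le _ _
        _ ≤ (‖y ^ j‖ * ‖(x - y) ^ (m - j)‖) * ‖((m.choose j : ℕ) : 𝔸)‖ := by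
            gcongr
            exact norm_mul_le _ _
        _ ≤ (Ey * (D * ‖x - y‖ ^ (m - j))) * ((m.choose j : ℝ) * D) :=
            mul_le_mul
              (mul_le_mul (hypow j hj') (hrpow (m - j)) (norm_nonneg _) hEy0.le)
              hchoose (norm_nonneg _)
              (mul_nonneg hEy0.le (by positivity))
        _ = Ey * D^2 * ((m.choose j : ℝ) * ‖x - y‖ ^ (m - j)) := by ring
    refine (Finset.sum_le_sum hterm).trans ?_
    rw [← Finset.mul_sum]
    have hbinom : ∑ j ∈ Finset.range (m+1), ((m.choose j : ℝ) * ‖x - y‖ ^ (m - j))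
        = (1 + ‖x - y‖) ^ m := by
      rw [add_pow]
      exact Finset.sum_congr rfl fun j hj => by ring
    rw [hbinom]
    have hmr : (m:ℝ) * ‖x - y‖ ≤ M * T^(p+1) := by
      calc (m:ℝ) * ‖x - y‖ ≤ (N:ℝ) * (M * h^(p+1)) := by
            refine mul_le_mul (by exact_mod_cast hm) hr_le (norm_nonneg _) (by positivity)
        _ = M * ((N:ℝ) * h) * h^p := by rw [pow_succ]; ring
        _ = M * T * h^p := by rw [hNh]
        _ ≤ M * T * T^p := by gcongr
        _ = M * T^(p+1) := by rw [pow_succ]; ring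
    have hpow : (1 + ‖x - y‖) ^ m ≤ Real.exp (M * T^(p+1)) := by
      calc (1 + ‖x - y‖) ^ m ≤ (Real.exp ‖x - y‖) ^ m :=
            pow_le_pow_left₀ (by positivity)
              (by linarith [Real.add_one_le_exp ‖x - y‖]) m
        _ = Real.exp ((m:ℝ) * ‖x - y‖) := by rw [← Real.exp_nat_mul]
        _ ≤ Real.exp (M * T^(p+1)) := Real.exp_le_exp.2 hmr
    rw [hExdef]
    exact mul_le_mul_of_nonneg_left hpow (mul_nonneg hEy0.le (sq_nonneg D))
  -- conclusion
  have hyN : y ^ N = NormedSpace.exp ((T : ℂ) • a) := by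
    let +nondep : NormedAlgebra ℚ 𝔸 := .restrictScalars ℚ ℂ 𝔸
    rw [hy, ← NormedSpace.exp_nsmul]
    congr 1
    rw [← Nat.cast_smul_eq_nsmul ℂ, smul_smul]
    congr 1
    have hNc : (N:ℂ) ≠ 0 := by exact_mod_cast hNR.ne'
    rw [hc, hh]
    push_cast
    rw [mul_comm]; exact div_mul_cancel₀ _ hNc
  have key : x ^ N - y ^ N = (∑ i ∈ Finset.range N, x ^ i * y ^ (N - 1 - i)) * (x - y) :=
    (hxy.geom_sum₂_mul N).symm
  rw [← hyN, key]
  calc ‖(∑ i ∈ Finset.range N, x ^ i * y ^ (N - 1 - i)) * (x - y)‖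
      ≤ ‖∑ i ∈ Finset.range N, x ^ i * y ^ (N - 1 - i)‖ * ‖x - y‖ := norm_mul_le _ _
    _ ≤ (∑ i ∈ Finset.range N, ‖x ^ i * y ^ (N - 1 - i)‖) * ‖x - y‖ :=
        mul_le_mul_of_nonneg_right (norm_sum_le _ _) (norm_nonneg _)
    _ ≤ (∑ _i ∈ Finset.range N, Ex * Ey) * ‖x - y‖ := by
        refine mul_le_mul_of_nonneg_right (Finset.sum_le_sum fun i hi => ?_) (norm_nonneg _)
        calc ‖x ^ i * y ^ (N - 1 - i)‖ ≤ ‖x ^ i‖ * ‖y ^ (N - 1 - i)‖ := norm_mul_le _ _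
          _ ≤ Ex * Ey := mul_le_mul (hxpow i ((Finset.mem_range.mp hi).le))
              (hypow _ (by omega)) (norm_nonneg _) hEx0.le
    _ = (N:ℝ) * (Ex * Ey) * ‖x - y‖ := by
        rw [Finset.sum_const, Finset.card_range, nsmul_eq_mul]
    _ ≤ (N:ℝ) * (Ex * Ey) * (M * h^(p+1)) :=
        mul_le_mul_of_nonneg_left hr_le
          (mul_nonneg hNR.le (mul_nonneg hEx0.le hEy0.le))
    _ = Ex * Ey * M * ((N:ℝ) * h) * h^p := by rw [pow_succ]; ring
    _ = Ex * Ey * M * T * h^p := by rw [hNh]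
    _ ≤ (Ex * Ey * M * T + 1) * h^p :=
        mul_le_mul_of_nonneg_right (by linarith) (by positivity)
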